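/- With all weights equal to 1, the generating function of Dyck N-bridges equals B(1,1;t) = (1-6t^2) / (sqrt(1-8t^2)(1-9t^2)), with series expansion 1 + 7t^2 + 63t^4 + 583t^6 + 5407t^8 + ... -/

import Mathlib

/-- A classical walk `v` is compatible with the N-walk `w` if they have the same
length and the `i`-th step of `v` belongs to the `i`-th N-step of `w`. -/
def Compatible (v : List ℤ) (w : List (Finset ℤ)) : Prop :=
  List.Forall₂ (· ∈ ·) v w

/-- The reachable points of an N-walk: endpoints of all compatible classical walks. -/
def reach (w : List (Finset ℤ)) : Set ℤ :=
  {r | ∃ v : List ℤ, Compatible v w ∧ v.sum = r}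

/-- Minimal reachable point. -/
noncomputable def wmin (w : List (Finset ℤ)) : ℤ := sInf (reach w)

/-- Maximal reachable point. -/
noncomputable def wmax (w : List (Finset ℤ)) : ℤ := sSup (reach w)

/-- A Dyck N-walk: every N-step is one of {-1}, {1}, {-1,1}. -/
def IsDyckNWalk (w : List (Finset ℤ)) : Prop :=
  ∀ s ∈ w, s = {-1} ∨ s = {1} ∨ s = ({-1, 1} : Finset ℤ)

/-- A Motzkin N-walk: every N-step is a nonempty subset of {-1,0,1}. -/
def IsMotzkinNWalk (w : List (Finset ℤ)) : Prop :=
  ∀ s ∈ w, s.Nonempty ∧ s ⊆ ({-1, 0, 1} : Finset ℤ)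

/-- A classical meander: all partial sums are nonnegative. -/
def IsMeanderW (v : List ℤ) : Prop := ∀ n : ℕ, 0 ≤ (v.take n).sum

/-- An N-bridge: compatible with at least one classical walk ending at 0. -/
def IsNBridge (w : List (Finset ℤ)) : Prop := ∃ v, Compatible v w ∧ v.sum = 0

/-- An N-meander: compatible with at least one classical meander. -/
def IsNMeander (w : List (Finset ℤ)) : Prop := ∃ v, Compatible v w ∧ IsMeanderW v

/-- An N-excursion: compatible with at least one classical excursion. -/
def IsNExcursion (w : List (Finset ℤ)) : Prop :=
  ∃ v, Compatible v w ∧ IsMeanderW v ∧ v.sum = 0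

/-- Number of Dyck N-bridges of length n. -/
noncomputable def dyckBridgeCount (n : ℕ) : ℕ :=
  Nat.card {w : List (Finset ℤ) // w.length = n ∧ IsDyckNWalk w ∧ IsNBridge w}


namespace DyckAux

def smin (s : Finset ℤ) : ℤ := if s = {1} then 1 else -1
def smax (s : Finset ℤ) : ℤ := if s = {-1} then -1 else 1

lemma dyck_cons {s : Finset ℤ} {w : List (Finset ℤ)} (h : IsDyckNWalk (s :: w)) :
    (s = {-1} ∨ s = {1} ∨ s = ({-1, 1} : Finset ℤ)) ∧ IsDyckNWalk w :=
  ⟨h s List.mem_cons_self, fun t ht => h t (List.mem_cons_of_mem _ ht)⟩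

lemma compat_bounds {v : List ℤ} {w : List (Finset ℤ)} (hc : Compatible v w)
    (hd : IsDyckNWalk w) :
    (w.map smin).sum ≤ v.sum ∧ v.sum ≤ (w.map smax).sum ∧ Even (v.sum + w.length) := by
  induction hc with
  | nil => simp
  | @cons x s v' w' hx _ ih =>
    obtain ⟨hs, hd'⟩ := dyck_cons hd
    obtain ⟨h1, h2, h3⟩ := ih hd'
    have hx' : x = -1 ∨ x = 1 := by
      rcases hs with h | h | h <;> subst h <;> simp at hx <;> tauto
    have hsmin : smin s ≤ x := by
      rcases hs with h | h | h <;> subst h <;> rcases hx' with h | h <;> subst h <;>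
        simp_all [smin] <;> decide
    have hsmax : x ≤ smax s := by
      rcases hs with h | h | h <;> subst h <;> rcases hx' with h | h <;> subst h <;>
        simp_all [smax] <;> decide
    refine ⟨by simpa using add_le_add hsmin h1, by simpa using add_le_add hsmax h2, ?_⟩
    have : x + v'.sum + (w'.length + 1) = (x + 1) + (v'.sum + w'.length) := by ring
    simp only [List.sum_cons, List.length_cons]
    rw [Nat.cast_add, Nat.cast_one, this]
    have : Even (x + 1) := by rcases hx' with h | h <;> subst h <;> decide
    exact this.add h3

lemma dyck_parity {w : List (Finset ℤ)} (hd : IsDyckNWalk w) :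
    Even ((w.map smin).sum + w.length) := by
  induction w with
  | nil => simp
  | cons s w ih =>
    obtain ⟨hs, hd'⟩ := dyck_cons hd
    have h := ih hd'
    have h2 : Even (smin s + 1) := by
      rcases hs with h | h | h <;> subst h <;> simp [smin]
    simp only [List.map_cons, List.sum_cons, List.length_cons]
    rw [Nat.cast_add, Nat.cast_one, show smin s + (w.map smin).sum + ((w.length : ℤ) + 1)
      = (smin s + 1) + ((w.map smin).sum + w.length) by ring]
    exact h2.add h

@[simp] lemma smin_m : smin {-1} = -1 := by decide
@[simp] lemma smax_m : smax {-1} = -1 := by decide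
@[simp] lemma smin_p : smin {1} = 1 := by decide
@[simp] lemma smax_p : smax {1} = 1 := by decide
@[simp] lemma smin_b : smin {-1,1} = -1 := by decide
@[simp] lemma smax_b : smax {-1,1} = 1 := by decide

lemma smin_le_smax_sum {w : List (Finset ℤ)} (hd : IsDyckNWalk w) :
    (w.map smin).sum ≤ (w.map smax).sum := by
  induction w with
  | nil => simp
  | cons s w ih =>
    obtain ⟨hs, hd'⟩ := dyck_cons hd
    have h2 : smin s ≤ smax s := by
      rcases hs with h | h | h <;> subst h <;> simp [smin, smax] <;> decide
    simpa using add_le_add h2 (ih hd')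

lemma exists_compat {w : List (Finset ℤ)} (hd : IsDyckNWalk w) :
    ∀ r : ℤ, (w.map smin).sum ≤ r → r ≤ (w.map smax).sum → Even (r + w.length) →
    ∃ v, Compatible v w ∧ v.sum = r := by
  induction w with
  | nil =>
    intro r h1 h2 _
    simp only [List.map_nil, List.sum_nil] at h1 h2
    exact ⟨[], List.Forall₂.nil, by simp; omega⟩
  | cons s w ih =>
    intro r h1 h2 h3
    obtain ⟨hs, hd'⟩ := dyck_cons hd
    simp only [List.map_cons, List.sum_cons, List.length_cons, Nat.cast_add, Nat.cast_one] at h1 h2 h3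
    have hpar : ∀ x : ℤ, x = -1 ∨ x = 1 → Even ((r - x) + w.length) := by
      intro x hx
      have : r - x + (w.length : ℤ) = (r + ((w.length : ℤ) + 1)) + (-x - 1) := by ring
      rw [this]
      refine h3.add ?_
      rcases hx with h | h <;> subst h <;> decide
    rcases hs with h | h | h <;> subst h
    · -- s = {-1}
      rw [smin_m] at h1; rw [smax_m] at h2
      obtain ⟨v, hc, hsum⟩ := ih hd' (r + 1) (by omega) (by omega)
        (by have := hpar (-1) (Or.inl rfl); simpa using this)
      exact ⟨-1 :: v, List.Forall₂.cons (by simp) hc, by rw [List.sum_cons, hsum]; ring⟩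
    · -- s = {1}
      rw [smin_p] at h1; rw [smax_p] at h2
      obtain ⟨v, hc, hsum⟩ := ih hd' (r - 1) (by omega) (by omega) (hpar 1 (Or.inr rfl))
      exact ⟨1 :: v, List.Forall₂.cons (by simp) hc, by simp [hsum]⟩
    · -- s = {-1, 1}
      rw [smin_b] at h1; rw [smax_b] at h2
      by_cases hcase : (w.map smin).sum ≤ r - 1
      · obtain ⟨v, hc, hsum⟩ := ih hd' (r - 1) hcase (by omega) (hpar 1 (Or.inr rfl))
        exact ⟨1 :: v, List.Forall₂.cons (by simp) hc, by simp [hsum]⟩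
      · -- r ≤ smin sum; parity forces r < smin sum
        have hne : r ≠ (w.map smin).sum := by
          intro he
          have hp1 := dyck_parity hd'
          have hp2 := hpar 1 (Or.inr rfl)
          rw [he] at hp2
          have h := hp1.sub hp2
          rw [show ((w.map smin).sum + (w.length:ℤ)) - ((w.map smin).sum - 1 + (w.length:ℤ))
            = 1 by ring] at h
          exact (by decide : ¬ Even (1 : ℤ)) h
        have hr1 : (w.map smin).sum ≤ r + 1 := by omega
        have hr2 : r + 1 ≤ (w.map smax).sum := by
          have := smin_le_smax_sum hd'
          omega
        obtain ⟨v, hc, hsum⟩ := ih hd' (r + 1) hr1 hr2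
          (by have := hpar (-1) (Or.inl rfl); simpa using this)
        exact ⟨-1 :: v, List.Forall₂.cons (by simp) hc, by rw [List.sum_cons, hsum]; ring⟩

lemma bridge_iff {w : List (Finset ℤ)} (hd : IsDyckNWalk w) :
    IsNBridge w ↔ (Even w.length ∧ (w.map smin).sum ≤ 0 ∧ 0 ≤ (w.map smax).sum) := by
  constructor
  · rintro ⟨v, hc, hsum⟩
    obtain ⟨h1, h2, h3⟩ := compat_bounds hc hd
    rw [hsum] at h1 h2 h3
    simp only [zero_add] at h3
    exact ⟨by exact_mod_cast (Int.even_coe_nat _).mp h3, h1, h2⟩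
  · rintro ⟨he, h1, h2⟩
    obtain ⟨v, hc, hsum⟩ := exists_compat hd 0 h1 h2
      (by simpa using (Int.even_coe_nat _).mpr he)
    exact ⟨v, hc, hsum⟩

def enc (j : Fin 3) : Finset ℤ := if j = 0 then {-1} else if j = 1 then {1} else {-1, 1}

def A (n : ℕ) (j : Fin 3) (f : Fin n → Fin 3) : ℕ :=
  (Finset.univ.filter (fun i => f i = j)).card

lemma enc_inj : Function.Injective enc := by decide

lemma sum_ite_card {n : ℕ} (f : Fin n → Fin 3) (j : Fin 3) :
    (∑ i : Fin n, if f i = j then (1 : ℤ) else -1) = 2 * (A n j f : ℤ) - n := by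
  rw [Finset.sum_ite, Finset.sum_const, Finset.sum_const]
  have h := Finset.card_filter_add_card_filter_not (s := Finset.univ)
    (p := fun i : Fin n => f i = j)
  simp only [Finset.card_univ, Fintype.card_fin] at h
  rw [A]
  simp only [nsmul_eq_mul, smul_eq_mul]
  push_cast [← h]
  ring

lemma smin_sum (n : ℕ) (f : Fin n → Fin 3) :
    (((List.ofFn f).map enc).map smin).sum = 2 * (A n 1 f : ℤ) - n := by
  rw [List.map_map, List.map_ofFn, List.sum_ofFn]
  have he : ∀ j : Fin 3, smin (enc j) = if j = 1 then (1 : ℤ) else -1 := by decide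
  simp only [Function.comp_def, he]
  exact sum_ite_card f 1

lemma smax_sum (n : ℕ) (f : Fin n → Fin 3) :
    (((List.ofFn f).map enc).map smax).sum = (n : ℤ) - 2 * (A n 0 f : ℤ) := by
  rw [List.map_map, List.map_ofFn, List.sum_ofFn]
  have he : ∀ j : Fin 3, smax (enc j) = if j = 0 then (-1 : ℤ) else 1 := by decide
  simp only [Function.comp_def, he]
  have : ∀ i : Fin n, (if f i = 0 then (-1:ℤ) else 1) = -(if f i = 0 then (1:ℤ) else -1) := by
    intro i; split <;> ring
  simp only [this, Finset.sum_neg_distrib]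
  rw [sum_ite_card f 0]
  ring

def dec (s : Finset ℤ) : Fin 3 := if s = {-1} then 0 else if s = {1} then 1 else 2

lemma enc_dec (s : Finset ℤ) (h : s = {-1} ∨ s = {1} ∨ s = ({-1,1} : Finset ℤ)) :
    enc (dec s) = s := by
  rcases h with h | h | h <;> subst h <;> decide

lemma dyckΦ (n : ℕ) (f : Fin n → Fin 3) : IsDyckNWalk ((List.ofFn f).map enc) := by
  intro s hs
  rw [List.mem_map] at hs
  obtain ⟨j, _, rfl⟩ := hs
  have : ∀ j : Fin 3, enc j = {-1} ∨ enc j = {1} ∨ enc j = ({-1,1} : Finset ℤ) := by decide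
  exact this j

def Psi (n : ℕ) (p : {f : Fin n → Fin 3 // Even n ∧ 2 * A n 0 f ≤ n ∧ 2 * A n 1 f ≤ n}) :
    {w : List (Finset ℤ) // w.length = n ∧ IsDyckNWalk w ∧ IsNBridge w} :=
  ⟨(List.ofFn p.1).map enc, by simp, dyckΦ n p.1, by
    rw [bridge_iff (dyckΦ n p.1)]
    obtain ⟨he, h0, h1⟩ := p.2
    refine ⟨by simpa using he, ?_, ?_⟩
    · rw [smin_sum]; push_cast; omega
    · rw [smax_sum]; push_cast; omega⟩

lemma count_eq (n : ℕ) :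
    dyckBridgeCount n
      = Fintype.card {f : Fin n → Fin 3 // Even n ∧ 2 * A n 0 f ≤ n ∧ 2 * A n 1 f ≤ n} := by
  rw [dyckBridgeCount, ← Nat.card_eq_fintype_card]
  refine (Nat.card_eq_of_bijective (Psi n) ?_).symm
  constructor
  · rintro ⟨f, hf⟩ ⟨g, hg⟩ he
    simp only [Psi, Subtype.mk.injEq] at he
    have := List.ofFn_injective ((List.map_injective_iff.mpr enc_inj) he)
    exact Subtype.ext this
  · rintro ⟨w, hlen, hd, hb⟩
    have hlt : ∀ i : Fin n, (i : ℕ) < w.length := fun i => by rw [hlen]; exact i.2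
    set f : Fin n → Fin 3 := fun i => dec (w[(i : ℕ)]'(hlt i)) with hf
    have hw : (List.ofFn f).map enc = w := by
      apply List.ext_getElem (by simp [hlen])
      intro i h1 h2
      simp only [List.getElem_map, List.getElem_ofFn, hf]
      exact enc_dec _ (hd _ (List.getElem_mem _))
    refine ⟨⟨f, ?_⟩, ?_⟩
    · have hb' : IsNBridge ((List.ofFn f).map enc) := by rw [hw]; exact hb
      rw [bridge_iff (dyckΦ n f), smin_sum, smax_sum] at hb'
      obtain ⟨he, h0, h1⟩ := hb'
      have hA0 : A n 0 f ≤ n := by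
        have := Finset.card_filter_le (Finset.univ : Finset (Fin n)) (fun i => f i = 0)
        simpa [A] using this
      refine ⟨by simpa using he, by omega, by omega⟩
    · exact Subtype.ext (by simpa [Psi] using hw)

open Finset in
lemma card_fiber (n : ℕ) (s : Finset (Fin n)) :
    (Finset.univ.filter
      (fun f : Fin n → Fin 3 => Finset.univ.filter (fun i => f i = 0) = s)).card
      = 2 ^ (n - s.card) := by
  classical
  have hset : Finset.univ.filter
      (fun f : Fin n → Fin 3 => Finset.univ.filter (fun i => f i = 0) = s)
      = Fintype.piFinset (fun i => if i ∈ s then ({0} : Finset (Fin 3)) else {1, 2}) := by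
    ext f
    simp only [mem_filter, mem_univ, true_and, Fintype.mem_piFinset, Finset.ext_iff]
    constructor
    · intro h i
      have := h i
      by_cases hi : i ∈ s
      · rw [if_pos hi, Finset.mem_singleton]
        exact this.mpr hi
      · rw [if_neg hi]
        have h0 : f i ≠ 0 := fun h' => hi (this.mp h')
        have h3 : ∀ x : Fin 3, x ≠ 0 → x ∈ ({1, 2} : Finset (Fin 3)) := by decide
        exact h3 _ h0
    · intro h i
      have := h i
      by_cases hi : i ∈ s
      · rw [if_pos hi, Finset.mem_singleton] at this
        simp [this, hi]
      · rw [if_neg hi] at this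
        have h3 : ∀ x : Fin 3, x ∈ ({1,2} : Finset (Fin 3)) → x ≠ 0 := by decide
        simp [h3 _ this, hi]
  rw [hset, Fintype.card_piFinset]
  have : ∀ i : Fin n, ((if i ∈ s then ({0} : Finset (Fin 3)) else {1, 2}).card)
      = if i ∈ s then 1 else 2 := by intro i; split <;> decide
  simp only [this]
  rw [← Finset.prod_mul_prod_compl s]
  rw [Finset.prod_congr rfl (fun i hi => if_pos hi),
    Finset.prod_congr rfl (fun i (hi : i ∈ sᶜ) => if_neg (Finset.mem_compl.mp hi))]
  simp [Finset.card_compl]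

def hseq (m : ℕ) : ℕ := ∑ b ∈ Finset.range m, (2 * m).choose b * 2 ^ b

open Finset in
lemma card_B0 (m : ℕ) :
    (Finset.univ.filter (fun f : Fin (2*m) → Fin 3 => m < A (2*m) 0 f)).card = hseq m := by
  classical
  rw [Finset.card_eq_sum_card_fiberwise
    (f := fun f : Fin (2*m) → Fin 3 => Finset.univ.filter (fun i => f i = 0))
    (t := Finset.univ.filter (fun s : Finset (Fin (2*m)) => m < s.card))
    (by intro f hf
        simp only [Finset.mem_coe, mem_filter, mem_univ, true_and] at hf ⊢
        exact hf)]
  have hstep : ∀ s ∈ Finset.univ.filter (fun s : Finset (Fin (2*m)) => m < s.card),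
      ((Finset.univ.filter (fun f : Fin (2*m) → Fin 3 => m < A (2*m) 0 f)).filter
        (fun f => Finset.univ.filter (fun i => f i = 0) = s)).card = 2 ^ (2*m - s.card) := by
    intro s hs
    simp only [mem_filter, mem_univ, true_and] at hs
    rw [← card_fiber (2*m) s]
    congr 1
    ext f
    simp only [mem_filter, mem_univ, true_and, and_iff_right_iff_imp]
    intro h
    rw [A, h]
    exact hs
  rw [Finset.sum_congr rfl hstep]
  -- reindex by complement
  rw [Finset.sum_nbij' (i := fun s => sᶜ) (j := fun s => sᶜ)
    (t := Finset.univ.filter (fun s : Finset (Fin (2*m)) => s.card < m))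
    (g := fun s => 2 ^ s.card)]
  · -- now group by card
    rw [← Finset.sum_fiberwise_of_maps_to
      (g := fun s : Finset (Fin (2*m)) => s.card) (t := Finset.range m)
      (by intro s hs
          simp only [mem_filter, mem_univ, true_and] at hs
          simpa using hs)]
    rw [hseq]
    apply Finset.sum_congr rfl
    intro b hb
    simp only [Finset.mem_range] at hb
    have : (Finset.univ.filter (fun s : Finset (Fin (2*m)) => s.card < m)).filter
        (fun s => s.card = b) = Finset.powersetCard b Finset.univ := by
      ext s
      simp only [mem_filter, mem_univ, true_and, Finset.mem_powersetCard_univ]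
      constructor
      · rintro ⟨_, h⟩; exact h
      · intro h; exact ⟨h ▸ hb, h⟩
    rw [this]
    rw [Finset.sum_congr rfl (fun s hs => by
      rw [Finset.mem_powersetCard_univ.mp hs])]
    rw [Finset.sum_const, Finset.card_powersetCard, Finset.card_univ, Fintype.card_fin,
      smul_eq_mul]
  · intro s hs
    simp only [mem_filter, mem_univ, true_and] at hs ⊢
    rw [Finset.card_compl, Fintype.card_fin]
    have := s.card_le_univ
    simp only [Finset.card_univ, Fintype.card_fin] at this
    omega
  · intro s hs
    simp only [mem_filter, mem_univ, true_and] at hs ⊢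
    rw [Finset.card_compl, Fintype.card_fin]
    have := s.card_le_univ
    simp only [Finset.card_univ, Fintype.card_fin] at this
    omega
  · intro s _; exact compl_compl s
  · intro s _; exact compl_compl s
  · intro s hs
    rw [Finset.card_compl, Fintype.card_fin]

lemma count_odd (n : ℕ) (h : ¬ Even n) : dyckBridgeCount n = 0 := by
  rw [count_eq]
  exact Fintype.card_eq_zero_iff.mpr ⟨fun p => absurd p.2.1 h⟩

lemma A_sum_le (m : ℕ) (f : Fin (2*m) → Fin 3) : A (2*m) 0 f + A (2*m) 1 f ≤ 2*m := by
  rw [A, A, ← Finset.card_union_of_disjoint]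
  · have h := Finset.card_le_univ ((Finset.univ.filter (fun i => f i = 0)) ∪
      (Finset.univ.filter (fun i => f i = 1)))
    simpa using h
  · rw [Finset.disjoint_filter]
    intro i _ h0 h1
    rw [h0] at h1
    exact absurd h1 (by decide)

open Finset in
lemma count_even (m : ℕ) : dyckBridgeCount (2*m) + 2 * hseq m = 9 ^ m := by
  classical
  rw [count_eq]
  rw [Fintype.card_subtype]
  have hpred : Finset.univ.filter
      (fun f : Fin (2*m) → Fin 3 => Even (2*m) ∧ 2 * A (2*m) 0 f ≤ 2*m ∧ 2 * A (2*m) 1 f ≤ 2*m)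
      = Finset.univ.filter
      (fun f : Fin (2*m) → Fin 3 => A (2*m) 0 f ≤ m ∧ A (2*m) 1 f ≤ m) := by
    apply Finset.filter_congr
    intro f _
    constructor
    · rintro ⟨_, h1, h2⟩; exact ⟨by omega, by omega⟩
    · rintro ⟨h1, h2⟩; exact ⟨even_two_mul m, by omega, by omega⟩
  rw [hpred]
  have htot := Finset.card_filter_add_card_filter_not (s := (Finset.univ : Finset (Fin (2*m) → Fin 3)))
    (p := fun f => A (2*m) 0 f ≤ m ∧ A (2*m) 1 f ≤ m)
  have hneg : Finset.univ.filter
      (fun f : Fin (2*m) → Fin 3 => ¬(A (2*m) 0 f ≤ m ∧ A (2*m) 1 f ≤ m))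
      = (Finset.univ.filter (fun f : Fin (2*m) → Fin 3 => m < A (2*m) 0 f))
        ∪ (Finset.univ.filter (fun f : Fin (2*m) → Fin 3 => m < A (2*m) 1 f)) := by
    rw [← Finset.filter_or]
    apply Finset.filter_congr
    intro f _
    constructor
    · intro h; omega
    · intro h; omega
  have hdisj : Disjoint (Finset.univ.filter (fun f : Fin (2*m) → Fin 3 => m < A (2*m) 0 f))
      (Finset.univ.filter (fun f : Fin (2*m) → Fin 3 => m < A (2*m) 1 f)) := by
    rw [Finset.disjoint_filter]
    intro f _ h0 h1
    have := A_sum_le m f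
    omega
  have hswap : (Finset.univ.filter (fun f : Fin (2*m) → Fin 3 => m < A (2*m) 1 f)).card
      = (Finset.univ.filter (fun f : Fin (2*m) → Fin 3 => m < A (2*m) 0 f)).card := by
    have hAswap : ∀ f : Fin (2*m) → Fin 3, A (2*m) 0 ((Equiv.swap 0 1) ∘ f) = A (2*m) 1 f := by
      intro f
      rw [A, A]
      congr 1
      ext i
      simp only [Finset.mem_filter, Function.comp_apply]
      have : ∀ x : Fin 3, (Equiv.swap (0 : Fin 3) 1) x = 0 ↔ x = 1 := by decide
      rw [this]
    apply Finset.card_bij' (i := fun f _ => (Equiv.swap (0:Fin 3) 1) ∘ f)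
      (j := fun f _ => (Equiv.swap (0:Fin 3) 1) ∘ f)
    · intro f hf
      simp only [Finset.mem_filter, Finset.mem_univ, true_and] at hf ⊢
      rw [hAswap]
      exact hf
    · intro f hf
      simp only [Finset.mem_filter, Finset.mem_univ, true_and] at hf ⊢
      rw [← hAswap ((Equiv.swap (0:Fin 3) 1) ∘ f)]
      have : (Equiv.swap (0:Fin 3) 1) ∘ ((Equiv.swap (0:Fin 3) 1) ∘ f) = f := by
        ext i; simp
      rw [this]
      exact hf
    · intro f _; ext i; simp
    · intro f _; ext i; simp
  have hcard_univ : (Finset.univ : Finset (Fin (2*m) → Fin 3)).card = 9 ^ m := by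
    rw [Finset.card_univ, Fintype.card_fun, Fintype.card_fin, Fintype.card_fin,
      show (9:ℕ) = 3^2 by norm_num, ← pow_mul]
  rw [hneg, Finset.card_union_of_disjoint hdisj, hswap, card_B0, hcard_univ] at htot
  omega

lemma hseq_vals : hseq 0 = 0 ∧ hseq 1 = 1 ∧ hseq 2 = 9 ∧ hseq 3 = 73 ∧ hseq 4 = 577 := by
  refine ⟨?_, ?_, ?_, ?_, ?_⟩ <;> simp [hseq, Finset.sum_range_succ] <;> decide

lemma count_vals : dyckBridgeCount 0 = 1 ∧ dyckBridgeCount 2 = 7 ∧ dyckBridgeCount 4 = 63 ∧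
    dyckBridgeCount 6 = 583 ∧ dyckBridgeCount 8 = 5407 := by
  obtain ⟨h0, h1, h2, h3, h4⟩ := hseq_vals
  have e0 := count_even 0
  have e1 := count_even 1
  have e2 := count_even 2
  have e3 := count_even 3
  have e4 := count_even 4
  rw [h0] at e0; rw [h1] at e1; rw [h2] at e2; rw [h3] at e3; rw [h4] at e4
  norm_num at e0 e1 e2 e3 e4
  exact ⟨by simpa using e0, by simpa using e1, by simpa using e2, by simpa using e3,
    by simpa using e4⟩

-- Central binomial convolution identity
open Finset in
lemma centralBinom_conv (n : ℕ) :
    ∑ k ∈ Finset.range (n+1), Nat.centralBinom k * Nat.centralBinom (n-k) = 4 ^ n := by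
  induction n with
  | zero => decide
  | succ n ih =>
    set c := Nat.centralBinom with hc
    have key : (n+1) * (∑ k ∈ range (n+2), c k * c (n+1-k))
        = (n+1) * (4 * ∑ k ∈ range (n+1), c k * c (n-k)) := by
      have h1 : (n+1) * (∑ k ∈ range (n+2), c k * c (n+1-k))
          = (∑ k ∈ range (n+2), k * c k * c (n+1-k))
            + ∑ k ∈ range (n+2), c k * ((n+1-k) * c (n+1-k)) := by
        rw [Finset.mul_sum, ← Finset.sum_add_distrib]
        apply Finset.sum_congr rfl
        intro k hk
        simp only [Finset.mem_range] at hk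
        have hk' : k + (n+1-k) = n+1 := by omega
        calc (n+1) * (c k * c (n+1-k)) = (k + (n+1-k)) * (c k * c (n+1-k)) := by rw [hk']
          _ = k * c k * c (n+1-k) + c k * ((n+1-k) * c (n+1-k)) := by ring
      have h2 : ∑ k ∈ range (n+2), c k * ((n+1-k) * c (n+1-k))
          = ∑ k ∈ range (n+2), k * c k * c (n+1-k) := by
        rw [← Finset.sum_range_reflect]
        apply Finset.sum_congr rfl
        intro k hk
        simp only [Finset.mem_range] at hk
        have e1 : n + 2 - 1 - k = n + 1 - k := by omega
        have e2 : n + 1 - (n + 1 - k) = k := by omega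
        rw [e1, e2]
        ring
      have h3 : ∑ k ∈ range (n+2), k * c k * c (n+1-k)
          = 2 * ∑ j ∈ range (n+1), (2*j+1) * c j * c (n-j) := by
        rw [Finset.sum_range_succ']
        simp only [Nat.zero_mul, zero_mul, add_zero]
        rw [Finset.mul_sum]
        apply Finset.sum_congr rfl
        intro j hj
        have : (j+1) * c (j+1) = 2 * (2*j+1) * c j := by
          rw [hc]; exact Nat.succ_mul_centralBinom_succ j
        have e : n + 1 - (j + 1) = n - j := by omega
        rw [e]
        calc (j+1) * c (j+1) * c (n-j) = ((j+1) * c (j+1)) * c (n-j) := by ring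
          _ = (2 * (2*j+1) * c j) * c (n-j) := by rw [this]
          _ = 2 * ((2*j+1) * c j * c (n-j)) := by ring
      have h4 : ∑ j ∈ range (n+1), (2*j+1) * c j * c (n-j)
          = (n+1) * ∑ j ∈ range (n+1), c j * c (n-j) := by
        have hr : ∑ j ∈ range (n+1), j * c j * c (n-j)
            = ∑ j ∈ range (n+1), (n-j) * c j * c (n-j) := by
          nth_rewrite 1 [← Finset.sum_range_reflect]
          apply Finset.sum_congr rfl
          intro j hj
          simp only [Finset.mem_range] at hj
          have e1 : n + 1 - 1 - j = n - j := by omega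
          have e2 : n - (n - j) = j := by omega
          rw [e1, e2]
          ring
        calc ∑ j ∈ range (n+1), (2*j+1) * c j * c (n-j)
            = ∑ j ∈ range (n+1), (j * c j * c (n-j)
                + (j * c j * c (n-j) + c j * c (n-j))) := by
              apply Finset.sum_congr rfl; intro j _; ring
          _ = ∑ j ∈ range (n+1), j * c j * c (n-j)
              + (∑ j ∈ range (n+1), j * c j * c (n-j)
                + ∑ j ∈ range (n+1), c j * c (n-j)) := by
              rw [Finset.sum_add_distrib, Finset.sum_add_distrib]
          _ = ∑ j ∈ range (n+1), j * c j * c (n-j)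
              + (∑ j ∈ range (n+1), (n-j) * c j * c (n-j)
                + ∑ j ∈ range (n+1), c j * c (n-j)) := by
              nth_rewrite 2 [hr]
              rfl
          _ = ∑ j ∈ range (n+1), (j * c j * c (n-j)
              + ((n-j) * c j * c (n-j) + c j * c (n-j))) := by
              rw [Finset.sum_add_distrib, Finset.sum_add_distrib]
          _ = ∑ j ∈ range (n+1), (n+1) * (c j * c (n-j)) := by
              apply Finset.sum_congr rfl
              intro j hj
              simp only [Finset.mem_range] at hj
              have e : j + (n-j) + 1 = n + 1 := by omega
              calc j * c j * c (n-j) + ((n-j) * c j * c (n-j) + c j * c (n-j))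
                  = (j + (n-j) + 1) * (c j * c (n-j)) := by ring
                _ = (n+1) * (c j * c (n-j)) := by rw [e]
          _ = (n+1) * ∑ j ∈ range (n+1), c j * c (n-j) := by rw [Finset.mul_sum]
      rw [h1, h2, h3, h4]
      ring
    have hcancel := Nat.eq_of_mul_eq_mul_left (Nat.succ_pos n) key
    rw [hcancel, ih]
    ring

lemma centralBinom_le_four_pow (k : ℕ) : Nat.centralBinom k ≤ 4 ^ k := by
  induction k with
  | zero => decide
  | succ k ih =>
    have h := Nat.succ_mul_centralBinom_succ k
    have h2 : (k+1) * Nat.centralBinom (k+1) ≤ (k+1) * (4 * Nat.centralBinom k) := by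
      rw [h]; nlinarith [Nat.centralBinom_pos k]
    have h3 := Nat.le_of_mul_le_mul_left h2 (Nat.succ_pos k)
    calc Nat.centralBinom (k+1) ≤ 4 * Nat.centralBinom k := h3
      _ ≤ 4 * 4^k := by omega
      _ = 4^(k+1) := by ring

lemma summable_cb {x : ℝ} (h0 : 0 ≤ x) (h4 : 4 * x < 1) :
    Summable (fun k => (Nat.centralBinom k : ℝ) * x ^ k) := by
  refine Summable.of_nonneg_of_le (fun k => by positivity) (fun k => ?_)
    (summable_geometric_of_lt_one (r := 4*x) (by positivity) h4)
  rw [mul_pow]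
  apply mul_le_mul_of_nonneg_right _ (pow_nonneg h0 k)
  exact_mod_cast Nat.cast_le.mpr (centralBinom_le_four_pow k)

lemma hasSum_cb {x : ℝ} (h0 : 0 ≤ x) (h4 : 4 * x < 1) :
    HasSum (fun k => (Nat.centralBinom k : ℝ) * x ^ k) (1 / Real.sqrt (1 - 4 * x)) := by
  have hsum := summable_cb h0 h4
  have hS := hsum.hasSum
  set S := ∑' k, (Nat.centralBinom k : ℝ) * x ^ k with hSdef
  have hnorm : Summable (fun k => ‖(Nat.centralBinom k : ℝ) * x ^ k‖) := by
    have : (fun k => ‖(Nat.centralBinom k : ℝ) * x ^ k‖)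
        = fun k => (Nat.centralBinom k : ℝ) * x ^ k := by
      funext k
      rw [Real.norm_eq_abs, abs_of_nonneg (by positivity)]
    rw [this]
    exact hsum
  have hsq : S * S = 1 / (1 - 4*x) := by
    rw [hSdef, tsum_mul_tsum_eq_tsum_sum_range_of_summable_norm hnorm hnorm]
    have heq : ∀ n : ℕ, (∑ k ∈ Finset.range (n+1),
        ((Nat.centralBinom k : ℝ) * x ^ k) * ((Nat.centralBinom (n-k) : ℝ) * x ^ (n-k)))
        = (4*x)^n := by
      intro n
      have : ∀ k ∈ Finset.range (n+1),
          ((Nat.centralBinom k : ℝ) * x ^ k) * ((Nat.centralBinom (n-k) : ℝ) * x ^ (n-k))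
          = ((Nat.centralBinom k * Nat.centralBinom (n-k) : ℕ) : ℝ) * x ^ n := by
        intro k hk
        simp only [Finset.mem_range] at hk
        have : x ^ k * x ^ (n-k) = x ^ n := by
          rw [← pow_add]
          congr 1
          omega
        push_cast
        rw [← this]
        ring
      rw [Finset.sum_congr rfl this, ← Finset.sum_mul, ← Nat.cast_sum, centralBinom_conv,
        mul_pow]
      push_cast
      ring
    rw [tsum_congr heq, tsum_geometric_of_lt_one (by positivity) h4]
    rw [one_div]
  have hS1 : (1:ℝ) ≤ S := by
    have := le_hasSum hS 0 (fun i _ => by positivity)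
    simpa using this
  have hSpos : (0:ℝ) < S := by linarith
  have h1m : (0:ℝ) < 1 - 4*x := by linarith
  have hsqrt : Real.sqrt (1 - 4*x) = 1 / S := by
    have : (1 - 4*x) = (1/S)^2 := by
      rw [div_pow, one_pow, sq]
      rw [hsq]
      field_simp
    rw [this, Real.sqrt_sq (by positivity)]
  rw [hsqrt]
  rw [one_div_one_div]
  exact hS

open Finset in
lemma L1 (N k : ℕ) : ∑ b ∈ range (k+1), (N+1).choose b * 2^b
    = ∑ b ∈ range (k+1), N.choose b * 2^b + 2 * ∑ b ∈ range k, N.choose b * 2^b := by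
  rw [Finset.sum_range_succ' (fun b => (N+1).choose b * 2^b) k]
  have : ∀ b ∈ range k, (N+1).choose (b+1) * 2^(b+1)
      = N.choose (b+1) * 2^(b+1) + 2 * (N.choose b * 2^b) := by
    intro b _
    rw [Nat.choose_succ_succ']
    ring
  rw [Finset.sum_congr rfl this, Finset.sum_add_distrib]
  rw [Finset.sum_range_succ' (fun b => N.choose b * 2^b) k]
  simp only [Nat.choose_zero_right, pow_zero, mul_one]
  rw [Finset.mul_sum]
  ring

open Finset in
lemma L1' (N k : ℕ) : ∑ b ∈ range k, (N+1).choose b * 2^b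
    = ∑ b ∈ range k, N.choose b * 2^b + 2 * ∑ b ∈ range (k-1), N.choose b * 2^b := by
  cases k with
  | zero => simp
  | succ k => exact L1 N k

lemma cb_choose_id (k : ℕ) :
    Nat.centralBinom (k+1) = 2 * ((2*k).choose k + (2*k).choose (k+1)) := by
  rw [Nat.centralBinom]
  have h1 : 2 * (k+1) = (2*k+1) + 1 := by ring
  rw [h1, Nat.choose_succ_succ]
  have h2 : (2*k+1).choose k = (2*k+1).choose (k+1) := by
    rw [← Nat.choose_symm (by omega : k ≤ 2*k+1)]
    congr 1
    omega
  have h3 : (2*k+1).choose (k+1) = (2*k).choose k + (2*k).choose (k+1) :=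
    Nat.choose_succ_succ (2*k) k
  simp only [Nat.succ_eq_add_one] at *
  omega

noncomputable def dR (k : ℕ) : ℝ :=
  2^k * ((2*k).choose k : ℝ) - 2^(k+1) * ((2*k).choose (k+1) : ℝ)

lemma dR_eq_cb (k : ℕ) :
    dR k = 3 * 2^k * (Nat.centralBinom k : ℝ) - 2^k * (Nat.centralBinom (k+1) : ℝ) := by
  rw [dR, cb_choose_id, Nat.centralBinom, two_mul]
  push_cast
  ring

lemma hseq_rec (m : ℕ) : (hseq (m+1) : ℝ)
    = 9 * hseq m + 2^m * ((2*m).choose m : ℝ) - 2^(m+1) * ((2*m).choose (m+1) : ℝ) := by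
  cases m with
  | zero => simp [hseq]
  | succ M =>
    have e1 : 2 * (M + 1 + 1) = (2*(M+1)+1) + 1 := by ring
    have e2 : 2 * (M + 1) + 1 = (2*(M+1)) + 1 := by ring
    have h1 : hseq (M+2) = ∑ b ∈ Finset.range (M+2), (2*(M+1)+1+1).choose b * 2^b := by
      rw [hseq, e1]
    rw [h1, L1 (2*(M+1)+1) (M+1), L1 (2*(M+1)) (M+1), L1' (2*(M+1)) (M+1)]
    have h2 : ∑ b ∈ Finset.range (M+1), (2*(M+1)).choose b * 2^b = hseq (M+1) := rfl
    have h3 : ∑ b ∈ Finset.range (M+2), (2*(M+1)).choose b * 2^b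
        = hseq (M+1) + (2*(M+1)).choose (M+1) * 2^(M+1) := by
      rw [Finset.sum_range_succ]
      rfl
    have h4 : ∑ b ∈ Finset.range (M+1), (2*(M+1)).choose b * 2^b
        = (∑ b ∈ Finset.range (M+1-1), (2*(M+1)).choose b * 2^b)
          + (2*(M+1)).choose M * 2^M := by
      have : M + 1 - 1 = M := rfl
      rw [this, ← Finset.sum_range_succ]
    have h5 : (2*(M+1)).choose M = (2*(M+1)).choose (M+1+1) := by
      rw [← Nat.choose_symm (by omega : M ≤ 2*(M+1))]
      congr 1
      omega
    rw [h3, h2]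
    rw [show ∑ b ∈ Finset.range (M + 1 - 1), (2*(M+1)).choose b * 2 ^ b
      = hseq (M+1) - (2*(M+1)).choose M * 2^M by omega]
    have hle : (2*(M+1)).choose M * 2^M ≤ hseq (M+1) := by
      rw [h2.symm, h4]
      omega
    rw [h5] at hle ⊢
    push_cast [hle]
    ring

lemma hseq_psum (n : ℕ) : (hseq (n+1) : ℝ)
    = ∑ k ∈ Finset.range (n+1), dR k * 9^(n-k) := by
  induction n with
  | zero =>
    rw [hseq_rec 0]
    simp [hseq, dR]
  | succ n ih =>
    rw [hseq_rec (n+1), ih]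
    rw [Finset.sum_range_succ (f := fun k => dR k * 9^(n+1-k))]
    have hcong : ∑ k ∈ Finset.range (n+1), dR k * 9^(n+1-k)
        = ∑ k ∈ Finset.range (n+1), 9 * (dR k * 9^(n-k)) := by
      apply Finset.sum_congr rfl
      intro k hk
      simp only [Finset.mem_range] at hk
      rw [show n+1-k = (n-k)+1 by omega, pow_succ]
      ring
    rw [hcong, ← Finset.mul_sum, Nat.sub_self, pow_zero, mul_one, dR]
    ring

lemma main_hasSum (t : ℝ) (ht : |t| < 1/3) :
    HasSum (fun n : ℕ => (dyckBridgeCount n : ℝ) * t ^ n)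
      ((1 - 6 * t ^ 2) / (Real.sqrt (1 - 8 * t ^ 2) * (1 - 9 * t ^ 2))) := by
  obtain ⟨v0, -, -, -, -⟩ := count_vals
  by_cases ht0 : t = 0
  · subst ht0
    have : ((1:ℝ) - 6 * 0 ^ 2) / (Real.sqrt (1 - 8 * 0 ^ 2) * (1 - 9 * 0 ^ 2)) = 1 := by
      norm_num
    rw [this]
    have h := hasSum_single (f := fun n : ℕ => (dyckBridgeCount n : ℝ) * 0 ^ n) 0
      (fun b hb => by simp [zero_pow hb])
    simpa [v0] using h
  -- main case
  have hu0 : (0:ℝ) < t^2 := by positivity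
  have hu9 : 9 * t^2 < 1 := by
    have h1 : |t| * |t| < (1/3) * (1/3) :=
      mul_lt_mul'' ht ht (abs_nonneg t) (abs_nonneg t)
    rw [← abs_mul, ← sq] at h1
    rw [abs_of_nonneg (by positivity : (0:ℝ) ≤ t^2)] at h1
    linarith
  have hu8 : 8 * t^2 < 1 := by linarith
  set u := t^2 with hu
  have h19 : (0:ℝ) < 1 - 9*u := by linarith
  have h18 : (0:ℝ) < 1 - 8*u := by linarith
  have h4x : 4 * (2*u) < 1 := by linarith
  have h0x : (0:ℝ) ≤ 2*u := by linarith
  set s := Real.sqrt (1 - 8*u) with hs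
  have hspos : 0 < s := Real.sqrt_pos.mpr h18
  have h84 : 1 - 4*(2*u) = 1 - 8*u := by ring
  set S : ℝ := 1 / s with hSdef
  -- central binomial series
  have hcbS : HasSum (fun k => (Nat.centralBinom k : ℝ) * (2*u)^k) S := by
    have := hasSum_cb h0x h4x
    rwa [h84, ← hs, ← hSdef] at this
  -- shifted series
  have hcb1 : HasSum (fun k => (Nat.centralBinom (k+1) : ℝ) * (2*u)^(k+1)) (S - 1) := by
    have h := (hasSum_nat_add_iff' (f := fun k => (Nat.centralBinom k : ℝ) * (2*u)^k) 1).mpr hcbS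
    simp only [Finset.range_one, Finset.sum_singleton, Nat.centralBinom_zero, Nat.cast_one,
      pow_zero, mul_one, one_mul] at h
    exact h
  have hx0 : (2*u) ≠ 0 := by positivity
  have hcb1' : HasSum (fun k => (Nat.centralBinom (k+1) : ℝ) * (2*u)^k) ((S - 1) / (2*u)) := by
    have h := hcb1.div_const (2*u)
    have hfun : (fun k => (Nat.centralBinom (k+1) : ℝ) * (2*u)^(k+1) / (2*u))
        = fun k => (Nat.centralBinom (k+1) : ℝ) * (2*u)^k := by
      funext k
      rw [pow_succ]
      field_simp
    rwa [hfun] at h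
  set D : ℝ := 3 * S - (S - 1) / (2*u) with hD
  have hDsum : HasSum (fun k => dR k * u^k) D := by
    have h := (hcbS.mul_left 3).sub hcb1'
    have hfun : (fun k => 3 * ((Nat.centralBinom k : ℝ) * (2*u)^k)
        - (Nat.centralBinom (k+1) : ℝ) * (2*u)^k) = fun k => dR k * u^k := by
      funext k
      rw [dR_eq_cb, mul_pow]
      ring
    rwa [hfun] at h
  set G : ℝ := (1 - 9*u)⁻¹ with hG
  have hgeo : HasSum (fun j : ℕ => (9*u)^j) G :=
    hasSum_geometric_of_lt_one (by positivity) (by linarith)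
  -- summability in norm
  have hdbound : ∀ k, |dR k| ≤ 7 * 8^k := by
    intro k
    have b1 : (Nat.centralBinom k : ℝ) ≤ 4^k := by
      exact_mod_cast Nat.cast_le.mpr (centralBinom_le_four_pow k)
    have b2 : (Nat.centralBinom (k+1) : ℝ) ≤ 4^(k+1) := by
      exact_mod_cast Nat.cast_le.mpr (centralBinom_le_four_pow (k+1))
    have c1 : (0:ℝ) ≤ (Nat.centralBinom k : ℝ) := Nat.cast_nonneg _
    have c2 : (0:ℝ) ≤ (Nat.centralBinom (k+1) : ℝ) := Nat.cast_nonneg _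
    have p2 : (0:ℝ) < 2^k := by positivity
    have h8 : (2:ℝ)^k * 4^k = 8^k := by
      rw [← mul_pow]; norm_num
    have hp1 : (2:ℝ)^k * (Nat.centralBinom k : ℝ) ≤ 2^k * 4^k :=
      mul_le_mul_of_nonneg_left b1 (le_of_lt p2)
    have hp2 : (2:ℝ)^k * (Nat.centralBinom (k+1) : ℝ) ≤ 2^k * 4^(k+1) :=
      mul_le_mul_of_nonneg_left b2 (le_of_lt p2)
    have h8' : (2:ℝ)^k * 4^(k+1) = 4 * 8^k := by
      rw [pow_succ]
      calc (2:ℝ)^k * (4^k * 4) = (2^k * 4^k) * 4 := by ring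
        _ = 4 * 8^k := by rw [h8]; ring
    rw [dR_eq_cb, abs_le]
    constructor
    · have hq1 : (0:ℝ) ≤ 3 * 2^k * (Nat.centralBinom k : ℝ) := by positivity
      nlinarith [mul_nonneg (le_of_lt p2) c2]
    · nlinarith [mul_nonneg (le_of_lt p2) c1, mul_nonneg (le_of_lt p2) c2]
  have hfnorm : Summable (fun k => ‖dR k * u^k‖) := by
    refine Summable.of_nonneg_of_le (fun k => norm_nonneg _) (fun k => ?_)
      ((summable_geometric_of_lt_one (r := 8*u) (by positivity) (by linarith)).mul_left 7)
    rw [norm_mul, Real.norm_eq_abs, Real.norm_eq_abs, abs_of_nonneg (by positivity : (0:ℝ) ≤ u^k)]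
    calc |dR k| * u^k ≤ (7 * 8^k) * u^k := by
          apply mul_le_mul_of_nonneg_right (hdbound k) (by positivity)
      _ = 7 * (8*u)^k := by rw [mul_pow]; ring
  have hgnorm : Summable (fun j => ‖(9*u)^j‖) := by
    have : (fun j => ‖(9*u)^j‖) = fun j => (9*u)^j := by
      funext j
      rw [Real.norm_eq_abs, abs_of_nonneg (by positivity)]
    rw [this]
    exact summable_geometric_of_lt_one (by positivity) (by linarith)
  have hCauchy := hasSum_sum_range_mul_of_summable_norm hfnorm hgnorm
  rw [hDsum.tsum_eq, hgeo.tsum_eq] at hCauchy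
  have hinner : ∀ n : ℕ, (∑ k ∈ Finset.range (n+1), (dR k * u^k) * ((9*u)^(n-k)))
      = (hseq (n+1) : ℝ) * u^n := by
    intro n
    rw [hseq_psum n, Finset.sum_mul]
    apply Finset.sum_congr rfl
    intro k hk
    simp only [Finset.mem_range] at hk
    have hpow : u^k * u^(n-k) = u^n := by
      rw [← pow_add, show k + (n-k) = n by omega]
    rw [mul_pow]
    calc dR k * u^k * (9^(n-k) * u^(n-k)) = dR k * 9^(n-k) * (u^k * u^(n-k)) := by ring
      _ = dR k * 9^(n-k) * u^n := by rw [hpow]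
  rw [show (fun n => ∑ k ∈ Finset.range (n+1), (dR k * u^k) * ((9*u)^(n-k)))
    = fun n => (hseq (n+1) : ℝ) * u^n from funext hinner] at hCauchy
  -- add back the 0th term
  have h5' := hCauchy.mul_left u
  have hfun5 : (fun n => u * ((hseq (n+1) : ℝ) * u^n))
      = fun n => (fun m => (hseq m : ℝ) * u^m) (n+1) := by
    funext n
    simp only [pow_succ]
    ring
  rw [hfun5] at h5'
  have h6 := (hasSum_nat_add_iff (f := fun m => (hseq m : ℝ) * u^m) 1).mp h5'
  have hseq0 : hseq 0 = 0 := by decide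
  simp only [Finset.range_one, Finset.sum_singleton, hseq0, Nat.cast_zero, pow_zero,
    zero_mul, mul_one, add_zero] at h6
  -- combine
  have h7 : HasSum (fun m => (dyckBridgeCount (2*m) : ℝ) * u^m)
      (G - 2 * (u * (D * G))) := by
    have h := hgeo.sub (h6.mul_left 2)
    have hfun : (fun m => (9*u)^m - 2 * ((hseq m : ℝ) * u^m))
        = fun m => (dyckBridgeCount (2*m) : ℝ) * u^m := by
      funext m
      have hcnt := count_even m
      have : (dyckBridgeCount (2*m) : ℝ) = 9^m - 2 * (hseq m : ℝ) := by
        have := congrArg (fun x : ℕ => (x : ℝ)) hcnt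
        push_cast at this
        linarith
      rw [this, mul_pow]
      ring
    rwa [hfun] at h
  -- reindex over all naturals
  have hinj : Function.Injective (fun m : ℕ => 2 * m) := fun a b h => by
    simp only [] at h
    omega
  have hzero : ∀ n : ℕ, n ∉ Set.range (fun m : ℕ => 2 * m) →
      (dyckBridgeCount n : ℝ) * t^n = 0 := by
    intro n hn
    have hodd : ¬ Even n := by
      intro he
      obtain ⟨r, hr⟩ := he
      exact hn ⟨r, show (fun m : ℕ => 2 * m) r = n by simp only []; omega⟩
    rw [count_odd n hodd]
    simp
  have hmain := (Function.Injective.hasSum_iff hinj hzero).mp (by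
    have hfun : ((fun n => (dyckBridgeCount n : ℝ) * t^n) ∘ (fun m : ℕ => 2 * m))
        = fun m => (dyckBridgeCount (2*m) : ℝ) * u^m := by
      funext m
      simp only [Function.comp_apply]
      rw [hu, ← pow_mul]
    rw [hfun]
    exact h7)
  -- final algebra
  have halg : G - 2 * (u * (D * G)) = (1 - 6 * u) / (s * (1 - 9*u)) := by
    rw [hG, hD, hSdef]
    have hs0 : s ≠ 0 := ne_of_gt hspos
    have h190 : (1 - 9*u) ≠ 0 := ne_of_gt h19
    have hu0' : u ≠ 0 := ne_of_gt hu0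
    field_simp
    ring
  rwa [halg] at hmain


end DyckAux

/-- with all weights 1, B(1,1;t) = (1-6t²)/(√(1-8t²)(1-9t²)),
with expansion 1 + 7t² + 63t⁴ + 583t⁶ + 5407t⁸ + ⋯ . -/
theorem dyck_bridge_gf :
    dyckBridgeCount 0 = 1 ∧ dyckBridgeCount 2 = 7 ∧ dyckBridgeCount 4 = 63 ∧
    dyckBridgeCount 6 = 583 ∧ dyckBridgeCount 8 = 5407 ∧
    ∀ t : ℝ, |t| < 1 / 3 →
      HasSum (fun n : ℕ => (dyckBridgeCount n : ℝ) * t ^ n)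
        ((1 - 6 * t ^ 2) / (Real.sqrt (1 - 8 * t ^ 2) * (1 - 9 * t ^ 2))) := by
  obtain ⟨a, b, c, d, e⟩ := DyckAux.count_vals
  exact ⟨a, b, c, d, e, fun t ht => DyckAux.main_hasSum t ht⟩
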